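/- Suppose G is bipartite and has the infinite collision property, and u, v are vertices whose graph distance is even. Then two independent simple random walks started at u and at v respectively collide at infinitely many times almost surely. -/

import Mathlib

open MeasureTheory
open scoped ENNReal Classical

namespace CollisionsStmt

variable {V : Type*}

/-- One-step transition probabilities of the simple random walk on `G`:
`p(u,v) = 1/deg u` if `v` is adjacent to `u`, and `0` otherwise. -/
noncomputable def step (G : SimpleGraph V) [G.LocallyFinite] (u v : V) : ℝ≥0∞ :=
  if G.Adj u v then ((G.degree u : ℝ≥0∞))⁻¹ else 0

/-- The `n`-step transition probabilities of the simple random walk on `G`. -/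
noncomputable def pn (G : SimpleGraph V) [G.LocallyFinite] : ℕ → V → V → ℝ≥0∞
  | 0, u, v => if u = v then 1 else 0
  | n + 1, u, v => ∑' w, step G u w * pn G n w v

/-- `μ` is the law (on path space, via the Ionescu–Tulcea trajectory construction) of
two independent walks with one-step transition probabilities `p`, started at `a` and `b`
respectively; equivalently, the Markov chain on `V × V` with kernel `p ⊗ p` started at `(a, b)`.
The law is characterized by being a probability measure with the prescribed
finite-dimensional (cylinder) distributions. -/
def IsPairWalkMeasure [MeasurableSpace V] (p : V → V → ℝ≥0∞) (a b : V)
    (μ : Measure (ℕ → V × V)) : Prop :=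
  IsProbabilityMeasure μ ∧
    ∀ (n : ℕ) (x : ℕ → V × V),
      μ {ω | ∀ i ≤ n, ω i = x i} =
        (if x 0 = (a, b) then (1 : ℝ≥0∞) else 0) *
          ∏ i ∈ Finset.range n, (p (x i).1 (x (i + 1)).1 * p (x i).2 (x (i + 1)).2)

/-- The event that the two walks do not collide at any time `n ≥ 1`. -/
def noCollision : Set (ℕ → V × V) := {ω | ∀ n ≥ 1, (ω n).1 ≠ (ω n).2}

/-- The event that the two walks have their last collision at the vertex `v`: for some
`n ≥ 0`, `X_n = Y_n = v` and `X_m ≠ Y_m` for all `m > n`. -/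
def lastCollisionAt (v : V) : Set (ℕ → V × V) :=
  {ω | ∃ n : ℕ, ω n = (v, v) ∧ ∀ m > n, (ω m).1 ≠ (ω m).2}

/-- The event that the two walks collide at only finitely many times. -/
def finCollisions : Set (ℕ → V × V) := {ω | {n : ℕ | (ω n).1 = (ω n).2}.Finite}

/-- The event that the two walks collide at infinitely many times. -/
def infCollisions : Set (ℕ → V × V) := {ω | {n : ℕ | (ω n).1 = (ω n).2}.Infinite}

/-- The event that the two walks never collide (including at time `0`). -/
def neverCollide : Set (ℕ → V × V) := {ω | ∀ n : ℕ, (ω n).1 ≠ (ω n).2}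


section Aux

set_option linter.unusedSectionVars false

variable [Countable V] [MeasurableSpace V] [DiscreteMeasurableSpace V]

/-- Cylinder event: the trajectory agrees with `x` up to time `n`. -/
def cyl (n : ℕ) (x : ℕ → V × V) : Set (ℕ → V × V) := {ω | ∀ i ≤ n, ω i = x i}

lemma measurableSet_pairSet (s : Set (V × V)) : MeasurableSet s :=
  (Set.to_countable s).measurableSet

lemma measurableSet_cyl (n : ℕ) (x : ℕ → V × V) : MeasurableSet (cyl n x) := by
  have h : cyl n x = ⋂ i, ⋂ (_ : i ≤ n), (fun ω : ℕ → V × V => ω i) ⁻¹' {x i} := by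
    ext ω; simp [cyl]
  rw [h]
  exact MeasurableSet.iInter fun i => MeasurableSet.iInter fun _ =>
    (measurable_pi_apply i) (measurableSet_pairSet _)

/-- The time shift by `n` on path space. -/
def shft (n : ℕ) (ω : ℕ → V × V) : ℕ → V × V := fun i => ω (n + i)

lemma measurable_shft (n : ℕ) : Measurable (shft (V := V) n) :=
  measurable_pi_lambda _ fun i => measurable_pi_apply (n + i)

def cylSets : Set (Set (ℕ → V × V)) := {s | ∃ n x, s = cyl n x}

lemma cyl_inter_eq {n m : ℕ} {x y : ℕ → V × V} (hnm : n ≤ m)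
    (hne : (cyl n x ∩ cyl m y).Nonempty) : cyl n x ∩ cyl m y = cyl m y := by
  obtain ⟨ω, hω1, hω2⟩ := hne
  apply Set.inter_eq_self_of_subset_right
  intro ρ hρ i hi
  rw [hρ i (hi.trans hnm), ← hω2 i (hi.trans hnm), hω1 i hi]

lemma isPiSystem_cylSets : IsPiSystem (cylSets (V := V)) := by
  rintro s ⟨n, x, rfl⟩ t ⟨m, y, rfl⟩ hne
  rcases le_total n m with h | h
  · rw [cyl_inter_eq h hne]; exact ⟨m, y, rfl⟩
  · rw [Set.inter_comm] at hne ⊢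
    rw [cyl_inter_eq h hne]; exact ⟨n, x, rfl⟩

lemma generateFrom_cylSets :
    (inferInstance : MeasurableSpace (ℕ → V × V))
      = MeasurableSpace.generateFrom (cylSets (V := V)) := by
  refine le_antisymm ?_ (MeasurableSpace.generateFrom_le ?_)
  · have hsingle : ∀ (i : ℕ) (c : V × V),
        MeasurableSet[MeasurableSpace.generateFrom (cylSets (V := V))]
          {ω : ℕ → V × V | ω i = c} := by
      intro i c
      have h : {ω : ℕ → V × V | ω i = c}
          = ⋃ (y : Fin (i + 1) → V × V) (_ : y (Fin.last i) = c),
              cyl i (fun j => if h : j < i + 1 then y ⟨j, h⟩ else c) := by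
        ext ω
        simp only [Set.mem_setOf_eq, Set.mem_iUnion]
        constructor
        · intro hc
          refine ⟨fun j => ω j, hc, fun j hj => ?_⟩
          simp [Nat.lt_succ_of_le hj]
        · rintro ⟨y, hy, hmem⟩
          have h2 := hmem i le_rfl
          simp only [dif_pos (Nat.lt_succ_self i)] at h2
          rw [h2]; exact hy
      rw [h]
      exact MeasurableSet.iUnion fun y => MeasurableSet.iUnion fun _ =>
        MeasurableSpace.measurableSet_generateFrom ⟨i, _, rfl⟩
    refine iSup_le fun i => ?_
    rintro t ⟨s, -, rfl⟩
    have h : (fun ω : ℕ → V × V => ω i) ⁻¹' s = ⋃ c ∈ s, {ω : ℕ → V × V | ω i = c} := by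
      ext ω; simp [eq_comm]
    rw [h]
    exact MeasurableSet.biUnion (Set.to_countable s) fun c _ => hsingle i c
  · rintro s ⟨n, x, rfl⟩
    exact measurableSet_cyl n x

lemma measure_cyl {p : V → V → ℝ≥0∞} {a b : V} {ν : Measure (ℕ → V × V)}
    (h : IsPairWalkMeasure p a b ν) (n : ℕ) (x : ℕ → V × V) :
    ν (cyl n x) = (if x 0 = (a, b) then (1 : ℝ≥0∞) else 0) *
      ∏ i ∈ Finset.range n, (p (x i).1 (x (i + 1)).1 * p (x i).2 (x (i + 1)).2) :=
  h.2 n x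

/-- The Markov property of the pair-walk measure at deterministic times, conditioning on a
full cylinder prefix. -/
lemma markov (G : SimpleGraph V) [G.LocallyFinite]
    (μ : V → V → Measure (ℕ → V × V))
    (hμ : ∀ a b : V, IsPairWalkMeasure (step G) a b (μ a b))
    (a b : V) (n : ℕ) (x : ℕ → V × V) {S : Set (ℕ → V × V)} (hS : MeasurableSet S) :
    μ a b (cyl n x ∩ shft n ⁻¹' S) = μ a b (cyl n x) * μ (x n).1 (x n).2 S := by
  haveI := (hμ a b).1
  haveI := (hμ (x n).1 (x n).2).1
  set ν₁ : Measure (ℕ → V × V) := Measure.map (shft n) ((μ a b).restrict (cyl n x)) with hν₁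
  set ν₂ : Measure (ℕ → V × V) := (μ a b (cyl n x)) • μ (x n).1 (x n).2 with hν₂
  have happ : ∀ {T : Set (ℕ → V × V)}, MeasurableSet T →
      ν₁ T = μ a b (cyl n x ∩ shft n ⁻¹' T) := by
    intro T hT
    rw [hν₁, Measure.map_apply (measurable_shft n) hT,
      Measure.restrict_apply (measurable_shft n hT), Set.inter_comm]
  haveI : IsFiniteMeasure ν₁ := by
    constructor
    rw [happ MeasurableSet.univ]
    exact lt_of_le_of_lt (measure_mono Set.inter_subset_left) (measure_lt_top _ _)
  haveI : IsFiniteMeasure ν₂ := by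
    constructor
    rw [hν₂, Measure.smul_apply, smul_eq_mul]
    exact ENNReal.mul_lt_top (measure_lt_top _ _) (measure_lt_top _ _)
  have hkey : ν₁ = ν₂ := by
    refine ext_of_generate_finite _ generateFrom_cylSets isPiSystem_cylSets ?_ ?_
    · rintro s ⟨m, y, rfl⟩
      rw [happ (measurableSet_cyl m y), hν₂, Measure.smul_apply, smul_eq_mul]
      by_cases hxy : y 0 = x n
      · set z : ℕ → V × V := fun i => if i < n then x i else y (i - n) with hz
        have hzx : ∀ i ≤ n, z i = x i := by
          intro i hi
          rcases lt_or_eq_of_le hi with h | h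
          · simp [hz, h]
          · subst h; simp [hz, hxy]
        have hzy : ∀ j, z (n + j) = y j := by
          intro j; simp [hz, Nat.add_sub_cancel_left]
        have hE : cyl n x ∩ shft n ⁻¹' cyl m y = cyl (n + m) z := by
          ext ω
          constructor
          · rintro ⟨h1, h2⟩ i hi
            by_cases hin : i < n
            · rw [h1 i hin.le, ← hzx i hin.le]
            · push_neg at hin
              have hieq : i = n + (i - n) := by omega
              have h3 := h2 (i - n) (by omega : i - n ≤ m)
              rw [hieq, hzy (i - n)]
              exact h3
          · intro h
            refine ⟨fun i hi => ?_, fun j hj => ?_⟩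
            · rw [h i (le_trans hi (Nat.le_add_right n m)), hzx i hi]
            · show ω (n + j) = y j
              rw [h (n + j) (by omega), hzy j]
        rw [hE, measure_cyl (hμ a b) (n + m) z, measure_cyl (hμ a b) n x,
          measure_cyl (hμ (x n).1 (x n).2) m y]
        have hz0 : z 0 = x 0 := hzx 0 (Nat.zero_le n)
        have hy0 : y 0 = ((x n).1, (x n).2) := by rw [hxy]
        rw [hz0, if_pos hy0, Finset.prod_range_add]
        have hprod1 : ∀ i ∈ Finset.range n,
            step G (z i).1 (z (i + 1)).1 * step G (z i).2 (z (i + 1)).2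
            = step G (x i).1 (x (i + 1)).1 * step G (x i).2 (x (i + 1)).2 := by
          intro i hi
          rw [Finset.mem_range] at hi
          rw [hzx i hi.le, hzx (i + 1) (by omega)]
        have hprod2 : ∀ j ∈ Finset.range m,
            step G (z (n + j)).1 (z (n + j + 1)).1 * step G (z (n + j)).2 (z (n + j + 1)).2
            = step G (y j).1 (y (j + 1)).1 * step G (y j).2 (y (j + 1)).2 := by
          intro j hj
          rw [hzy j, show n + j + 1 = n + (j + 1) by omega, hzy (j + 1)]
        rw [Finset.prod_congr rfl hprod1, Finset.prod_congr rfl hprod2]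
        ring
      · have hE : cyl n x ∩ shft n ⁻¹' cyl m y = ∅ := by
          ext ω
          simp only [Set.mem_inter_iff, Set.mem_empty_iff_false, iff_false, not_and]
          intro h1 h2
          have e1 : ω n = x n := h1 n le_rfl
          have e2 : ω (n + 0) = y 0 := h2 0 (Nat.zero_le m)
          apply hxy
          rw [← e2, Nat.add_zero, e1]
        rw [hE, measure_cyl (hμ (x n).1 (x n).2) m y,
          if_neg (by rw [show ((x n).1, (x n).2) = x n from rfl]; exact hxy)]
        simp
    · rw [happ MeasurableSet.univ, hν₂]
      simp
  have hfin := happ hS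
  rw [hkey, hν₂, Measure.smul_apply, smul_eq_mul] at hfin
  exact hfin.symm

lemma measurableSet_infCollisions :
    MeasurableSet (infCollisions : Set (ℕ → V × V)) := by
  have h : (infCollisions : Set (ℕ → V × V))
      = ⋂ N, ⋃ k, (fun ω : ℕ → V × V => ω (N + k)) ⁻¹' {p : V × V | p.1 = p.2} := by
    ext ω
    simp only [infCollisions, Set.mem_setOf_eq, Set.mem_iInter, Set.mem_iUnion,
      Set.mem_preimage]
    constructor
    · intro h N
      obtain ⟨k, hk1, hk2⟩ : ∃ k, k ∈ {m : ℕ | (ω m).1 = (ω m).2} ∧ N ≤ k := by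
        by_contra hc
        push_neg at hc
        exact h ((Set.finite_lt_nat N).subset fun m hm => (hc m hm))
      exact ⟨k - N, by rw [Nat.add_sub_cancel' hk2]; exact hk1⟩
    · intro h hfin
      obtain ⟨N, hN⟩ := hfin.bddAbove
      obtain ⟨k, hk⟩ := h (N + 1)
      have : N + 1 + k ≤ N := hN hk
      omega
  rw [h]
  exact MeasurableSet.iInter fun N => MeasurableSet.iUnion fun k =>
    (measurable_pi_apply _) (measurableSet_pairSet _)

lemma shft_preimage_infCollisions (n : ℕ) :
    shft n ⁻¹' (infCollisions : Set (ℕ → V × V)) = infCollisions := by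
  ext ω
  simp only [Set.mem_preimage, infCollisions, Set.mem_setOf_eq]
  show {m : ℕ | (ω (n + m)).1 = (ω (n + m)).2}.Infinite ↔ _
  constructor
  · intro h
    have himg := h.image (f := fun m => n + m)
      ((add_right_injective n).injOn)
    refine himg.mono ?_
    rintro k ⟨m, hm, rfl⟩
    exact hm
  · intro h
    have h2 : ({k : ℕ | (ω k).1 = (ω k).2} \ {k | k < n}).Infinite :=
      h.diff (Set.finite_lt_nat n)
    have himg := h2.image (f := fun k => k - n)
      (by
        rintro a ⟨-, ha⟩ b ⟨-, hb⟩ hab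
        simp only [Set.mem_setOf_eq, not_lt] at ha hb
        dsimp only at hab
        omega)
    refine himg.mono ?_
    rintro m ⟨k, ⟨hk1, hk2⟩, rfl⟩
    simp only [Set.mem_setOf_eq, not_lt] at hk2 ⊢
    rwa [Nat.add_sub_cancel' hk2]

lemma step_ne_zero (G : SimpleGraph V) [G.LocallyFinite] {x y : V} (h : G.Adj x y) :
    step G x y ≠ 0 := by
  rw [step, if_pos h]
  exact ENNReal.inv_ne_zero.mpr (ENNReal.natCast_ne_top _)

end Aux

/-- on a bipartite graph with the infinite collision property, two
independent walks started at even distance collide infinitely often a.s. -/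
theorem bipartite_even_distance_collide
    [Countable V] [MeasurableSpace V] [DiscreteMeasurableSpace V]
    (G : SimpleGraph V) [G.LocallyFinite]
    (hconn : G.Connected) (hdeg : ∀ v : V, 0 < G.degree v)
    (hbip : ∃ A : Set V, ∀ u v : V, G.Adj u v → (u ∈ A ↔ v ∉ A))
    (μ : V → V → Measure (ℕ → V × V))
    (hμ : ∀ a b : V, IsPairWalkMeasure (step G) a b (μ a b))
    (hICP : ∀ w : V, μ w w infCollisions = 1)
    (u v : V) (heven : Even (G.dist u v)) :
    μ u v infCollisions = 1 := by
  haveI huu := (hμ u u).1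
  haveI huv := (hμ u v).1
  obtain ⟨w, hw⟩ := (SimpleGraph.degree_pos_iff_exists_adj G u).mp (hdeg u)
  obtain ⟨p, hp⟩ := (hconn.preconnected u v).exists_walk_length_eq_dist
  set d := G.dist u v with hd
  set Y : ℕ → V × V := fun i => (if Even i then u else w, p.getVert i) with hY
  have hY0 : Y 0 = (u, u) := by
    simp [hY, SimpleGraph.Walk.getVert_zero]
  have hYd : Y d = (u, v) := by
    have h2 : p.getVert d = v := by
      rw [← hp]; exact SimpleGraph.Walk.getVert_length p
    simp [hY, heven, h2]
  have hcyl : μ u u (cyl d Y) ≠ 0 := by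
    rw [measure_cyl (hμ u u) d Y, if_pos hY0, one_mul]
    rw [Finset.prod_ne_zero_iff]
    intro i hi
    rw [Finset.mem_range] at hi
    apply mul_ne_zero
    · apply step_ne_zero
      show G.Adj (if Even i then u else w) (if Even (i + 1) then u else w)
      rcases Nat.even_or_odd i with he | ho
      · rw [if_pos he, if_neg (by simp [Nat.even_add_one, he])]
        exact hw
      · rw [if_neg (Nat.not_even_iff_odd.mpr ho),
          if_pos (Nat.even_add_one.mpr (Nat.not_even_iff_odd.mpr ho))]
        exact hw.symm
    · apply step_ne_zero
      show G.Adj (p.getVert i) (p.getVert (i + 1))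
      exact p.adj_getVert_succ (by omega)
  have key := markov G μ hμ u u d Y measurableSet_infCollisions.compl
  rw [Set.preimage_compl, shft_preimage_infCollisions] at key
  have h0 : μ u u infCollisionsᶜ = 0 := by
    have hc := measure_compl (μ := μ u u) measurableSet_infCollisions (measure_ne_top _ _)
    rw [hICP u, measure_univ] at hc
    simp [hc]
  have hle : μ u u (cyl d Y ∩ infCollisionsᶜ) = 0 :=
    le_antisymm (h0 ▸ measure_mono Set.inter_subset_right) zero_le
  rw [hle] at key
  have hzero : μ (Y d).1 (Y d).2 infCollisionsᶜ = 0 := by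
    rcases mul_eq_zero.mp key.symm with h | h
    · exact absurd h hcyl
    · exact h
  rw [hYd] at hzero
  simp only at hzero
  have hcompl := measure_compl (μ := μ u v) measurableSet_infCollisions (measure_ne_top _ _)
  rw [hzero, measure_univ] at hcompl
  have hge : (1 : ℝ≥0∞) ≤ μ u v infCollisions := tsub_eq_zero_iff_le.mp hcompl.symm
  exact le_antisymm prob_le_one hge
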